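/- Under the ADDA setup, for every k ≥ 0 one has ‖Â_k‖₂ ≤ (1 + ‖Y‖₂‖X‖₂)·‖𝒞(R;α)^{2^k}‖₂, and if the spectral radius ρ(𝒞(R;α)) < 1 then ‖Â_k‖₂ → 0 as k → ∞. -/

import Mathlib

open Matrix Filter
open scoped Matrix.Norms.L2Operator

namespace ADDAAux

variable {l : Type*} [Fintype l] [DecidableEq l]

lemma mul_inv_self {A : Matrix l l ℝ} (h : IsUnit A) : A * A⁻¹ = 1 :=
  Matrix.mul_nonsing_inv _ ((Matrix.isUnit_iff_isUnit_det A).mp h)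

lemma inv_self_mul {A : Matrix l l ℝ} (h : IsUnit A) : A⁻¹ * A = 1 :=
  Matrix.nonsing_inv_mul _ ((Matrix.isUnit_iff_isUnit_det A).mp h)

lemma isUnit_transpose {A : Matrix l l ℝ} (h : IsUnit A) : IsUnit Aᵀ := by
  rw [Matrix.isUnit_iff_isUnit_det, Matrix.det_transpose, ← Matrix.isUnit_iff_isUnit_det]
  exact h

lemma cancel_right {A B Cm : Matrix l l ℝ} (h : IsUnit Cm) (hab : A * Cm = B * Cm) : A = B := by
  have := congrArg (· * Cm⁻¹) hab
  simpa [mul_assoc, mul_inv_self h] using this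

lemma cancel_left {A B Cm : Matrix l l ℝ} (h : IsUnit Cm) (hab : Cm * A = Cm * B) : A = B := by
  have := congrArg (Cm⁻¹ * ·) hab
  simpa [← mul_assoc, inv_self_mul h] using this

lemma inv_swap {u v a b : Matrix l l ℝ} (hu : IsUnit u) (hv : IsUnit v) (h : u * a = b * v) :
    a * v⁻¹ = u⁻¹ * b := by
  have h2 : u * (a * v⁻¹) = u * (u⁻¹ * b) := by
    rw [← mul_assoc, h, mul_assoc, mul_inv_self hv, ← mul_assoc, mul_inv_self hu, one_mul,
      mul_one]
  exact cancel_left hu h2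

lemma iter (a x y : ℕ → Matrix l l ℝ) (X E : Matrix l l ℝ)
    (hsx : ∀ k, (x k)ᵀ = x k) (hsy : ∀ k, (y k)ᵀ = y k)
    (hu1 : ∀ k, IsUnit (1 + y k * x k)) (hu2 : ∀ k, IsUnit (1 + x k * y k))
    (ha : ∀ k, a (k+1) = a k * (1 + y k * x k)⁻¹ * a k)
    (hx : ∀ k, x (k+1) = x k + (a k)ᵀ * (1 + x k * y k)⁻¹ * x k * a k)
    (hy : ∀ k, y (k+1) = y k + a k * y k * (1 + x k * y k)⁻¹ * (a k)ᵀ)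
    (base1 : a 0 = (1 + y 0 * X) * E) (base2 : X - x 0 = (a 0)ᵀ * X * E) :
    ∀ k, a k = (1 + y k * X) * E ^ (2 ^ k) ∧ X - x k = (a k)ᵀ * X * E ^ (2 ^ k) := by
  intro k
  induction k with
  | zero => simpa using ⟨base1, base2⟩
  | succ k ih =>
    obtain ⟨ih1, ih2⟩ := ih
    have hPu := hu1 k
    have hP2u := hu2 k
    set P : Matrix l l ℝ := 1 + y k * x k with hP
    set P2 : Matrix l l ℝ := 1 + x k * y k with hP2
    have fP : (P⁻¹)ᵀ = P2⁻¹ := by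
      rw [Matrix.transpose_nonsing_inv]
      congr 1
      rw [hP, hP2]
      simp [Matrix.transpose_add, Matrix.transpose_mul, hsx k, hsy k]
    have f3 : P⁻¹ * y k = y k * P2⁻¹ := by
      have h' : P * y k = y k * P2 := by rw [hP, hP2]; noncomm_ring
      exact (inv_swap hPu hP2u h').symm
    have f4 : P⁻¹ = 1 - y k * (P2⁻¹ * x k) := by
      apply Matrix.inv_eq_left_inv
      have hxP : x k * P = P2 * x k := by rw [hP, hP2]; noncomm_ring
      have e1 : (1 - y k * (P2⁻¹ * x k)) * P = P - y k * (P2⁻¹ * (x k * P)) := by noncomm_ring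
      rw [e1, hxP, show P2⁻¹ * (P2 * x k) = x k by
        rw [← mul_assoc, inv_self_mul hP2u, one_mul], hP]
      noncomm_ring
    set q : Matrix l l ℝ := E ^ (2 ^ k) with hq
    have hsplit : E ^ (2 ^ (k+1)) = q * q := by
      rw [hq, ← pow_add]
      congr 1
      omega
    set Bt : Matrix l l ℝ := (a k)ᵀ with hBt
    have haT : (a (k+1))ᵀ = Bt * (P2⁻¹ * Bt) := by
      rw [ha k, Matrix.transpose_mul, Matrix.transpose_mul, fP]
    have keyPinv : P⁻¹ * (1 + y k * X) = 1 + y k * (P2⁻¹ * (X - x k)) := by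
      calc P⁻¹ * (1 + y k * X) = P⁻¹ + (P⁻¹ * y k) * X := by noncomm_ring
        _ = (1 - y k * (P2⁻¹ * x k)) + (y k * P2⁻¹) * X := by rw [f3, f4]
        _ = 1 + y k * (P2⁻¹ * (X - x k)) := by noncomm_ring
    constructor
    · rw [hsplit, hy k]
      calc a (k+1) = a k * (1 + y k * x k)⁻¹ * a k := ha k
        _ = a k * ((P⁻¹ * (1 + y k * X)) * q) := by rw [← hP, ih1]; noncomm_ring
        _ = a k * q + a k * (y k * (P2⁻¹ * ((X - x k) * q))) := by rw [keyPinv]; noncomm_ring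
        _ = (1 + (y k + a k * y k * P2⁻¹ * Bt) * X) * (q * q) := by
            have e : (1 + (y k + a k * y k * P2⁻¹ * Bt) * X) * (q * q)
                = ((1 + y k * X) * q) * q + a k * (y k * (P2⁻¹ * ((Bt * X * q) * q))) := by
              noncomm_ring
            rw [e, ← ih1, ← ih2]
    · rw [hsplit, hx k, haT]
      have hbr : P2⁻¹ * (x k * (1 + y k * X)) + P2⁻¹ * (X - x k) = X := by
        have e : P2⁻¹ * (x k * (1 + y k * X)) + P2⁻¹ * (X - x k) = P2⁻¹ * (P2 * X) := by
          rw [hP2]; noncomm_ring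
        rw [e, ← mul_assoc, inv_self_mul hP2u, one_mul]
      calc X - (x k + Bt * (1 + x k * y k)⁻¹ * x k * a k)
          = (X - x k) - Bt * (P2⁻¹ * (x k * a k)) := by rw [← hP2]; noncomm_ring
        _ = Bt * (X * q) - Bt * (P2⁻¹ * (x k * ((1 + y k * X) * q))) := by
            rw [ih2, ih1]; noncomm_ring
        _ = Bt * (X * q - P2⁻¹ * (x k * ((1 + y k * X) * q))) := by rw [mul_sub]
        _ = Bt * (P2⁻¹ * ((X - x k) * q)) := by
            have hbr' : X - P2⁻¹ * (x k * (1 + y k * X)) = P2⁻¹ * (X - x k) :=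
              sub_eq_of_eq_add' hbr.symm
            have hbr2 : X * q - P2⁻¹ * (x k * ((1 + y k * X) * q))
                = P2⁻¹ * ((X - x k) * q) := by
              calc X * q - P2⁻¹ * (x k * ((1 + y k * X) * q))
                  = (X - P2⁻¹ * (x k * (1 + y k * X))) * q := by noncomm_ring
                _ = (P2⁻¹ * (X - x k)) * q := by rw [hbr']
                _ = P2⁻¹ * ((X - x k) * q) := by rw [mul_assoc]
            rw [hbr2]
        _ = Bt * (P2⁻¹ * Bt) * X * (q * q) := by rw [ih2]; noncomm_ring

end ADDAAux
namespace ADDAAux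

variable {l : Type*} [Fintype l] [DecidableEq l]

lemma symiter (a x y : ℕ → Matrix l l ℝ)
    (hu1 : ∀ k, IsUnit (1 + y k * x k)) (hu2 : ∀ k, IsUnit (1 + x k * y k))
    (hx : ∀ k, x (k+1) = x k + (a k)ᵀ * (1 + x k * y k)⁻¹ * x k * a k)
    (hy : ∀ k, y (k+1) = y k + a k * y k * (1 + x k * y k)⁻¹ * (a k)ᵀ)
    (hx0 : (x 0)ᵀ = x 0) (hy0 : (y 0)ᵀ = y 0) :
    ∀ k, (x k)ᵀ = x k ∧ (y k)ᵀ = y k := by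
  intro k
  induction k with
  | zero => exact ⟨hx0, hy0⟩
  | succ k ih =>
    obtain ⟨ihx, ihy⟩ := ih
    have hPu := hu1 k
    have hP2u := hu2 k
    have fP : ((1 + y k * x k)⁻¹)ᵀ = (1 + x k * y k)⁻¹ := by
      rw [Matrix.transpose_nonsing_inv]
      congr 1
      simp [Matrix.transpose_add, Matrix.transpose_mul, ihx, ihy]
    have fP2 : ((1 + x k * y k)⁻¹)ᵀ = (1 + y k * x k)⁻¹ := by
      rw [Matrix.transpose_nonsing_inv]
      congr 1
      simp [Matrix.transpose_add, Matrix.transpose_mul, ihx, ihy]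
    have f2 : x k * (1 + y k * x k)⁻¹ = (1 + x k * y k)⁻¹ * x k :=
      inv_swap hP2u hPu (by noncomm_ring)
    have f3 : y k * (1 + x k * y k)⁻¹ = (1 + y k * x k)⁻¹ * y k :=
      inv_swap hPu hP2u (by noncomm_ring)
    constructor
    · have hT : ((a k)ᵀ * (1 + x k * y k)⁻¹ * x k * a k)ᵀ
          = (a k)ᵀ * (1 + x k * y k)⁻¹ * x k * a k := by
        calc ((a k)ᵀ * (1 + x k * y k)⁻¹ * x k * a k)ᵀ
            = (a k)ᵀ * ((x k * (1 + y k * x k)⁻¹) * a k) := by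
              simp [Matrix.transpose_mul, Matrix.transpose_transpose, ihx, fP2, mul_assoc]
          _ = (a k)ᵀ * (((1 + x k * y k)⁻¹ * x k) * a k) := by rw [f2]
          _ = (a k)ᵀ * (1 + x k * y k)⁻¹ * x k * a k := by noncomm_ring
      rw [hx k, Matrix.transpose_add, ihx, hT]
    · have hT : (a k * y k * (1 + x k * y k)⁻¹ * (a k)ᵀ)ᵀ
          = a k * y k * (1 + x k * y k)⁻¹ * (a k)ᵀ := by
        calc (a k * y k * (1 + x k * y k)⁻¹ * (a k)ᵀ)ᵀ
            = a k * (((1 + y k * x k)⁻¹ * y k) * (a k)ᵀ) := by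
              simp [Matrix.transpose_mul, Matrix.transpose_transpose, ihy, fP2, mul_assoc]
          _ = a k * ((y k * (1 + x k * y k)⁻¹) * (a k)ᵀ) := by rw [← f3]
          _ = a k * y k * (1 + x k * y k)⁻¹ * (a k)ᵀ := by noncomm_ring
      rw [hy k, Matrix.transpose_add, ihy, hT]

lemma psd_smul {A : Matrix l l ℝ} (hA : A.PosSemidef) {c : ℝ} (hc : 0 ≤ c) :
    (c • A).PosSemidef := by
  constructor
  · show (c • A)ᴴ = c • A
    rw [Matrix.conjTranspose_smul, hA.1]
    congr 1
  · exact (hA.smul hc).2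

open scoped MatrixOrder in
lemma psd_shift {K Gm : Matrix l l ℝ} (hK : K.PosSemidef) (hGm : Gm.PosSemidef)
    (hu : IsUnit (1 + Gm * K)) : (K * (1 + Gm * K)⁻¹).PosSemidef := by
  have hSp : (CFC.sqrt K).PosSemidef := (CFC.sqrt_nonneg K).posSemidef
  set S := CFC.sqrt K with hSdef
  have hSS : S * S = K := CFC.sqrt_mul_sqrt_self K hK.nonneg
  have hSH : Sᴴ = S := hSp.isHermitian
  have hT : (1 + S * Gm * S).PosDef := by
    have h2 : (S * Gm * Sᴴ).PosSemidef := hGm.mul_mul_conjTranspose_same S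
    rw [hSH] at h2
    exact Matrix.PosDef.one.add_posSemidef h2
  have hTu : IsUnit (1 + S * Gm * S) := hT.isUnit
  have hswap : S * (1 + Gm * K)⁻¹ = (1 + S * Gm * S)⁻¹ * S := by
    have h' : (1 + S * Gm * S) * S = S * (1 + Gm * K) := by
      rw [← hSS]; noncomm_ring
    exact inv_swap hTu hu h'
  have hrep : K * (1 + Gm * K)⁻¹ = S * (1 + S * Gm * S)⁻¹ * S := by
    calc K * (1 + Gm * K)⁻¹ = S * (S * (1 + Gm * K)⁻¹) := by rw [← mul_assoc, hSS]
      _ = S * ((1 + S * Gm * S)⁻¹ * S) := by rw [hswap]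
      _ = S * (1 + S * Gm * S)⁻¹ * S := (mul_assoc _ _ _).symm
  rw [hrep]
  have hTinv : ((1 + S * Gm * S)⁻¹).PosSemidef := hT.inv.posSemidef
  have := hTinv.mul_mul_conjTranspose_same S
  rwa [hSH] at this

lemma psditer (a x y : ℕ → Matrix l l ℝ)
    (hu1 : ∀ k, IsUnit (1 + y k * x k)) (hu2 : ∀ k, IsUnit (1 + x k * y k))
    (hx : ∀ k, x (k+1) = x k + (a k)ᵀ * (1 + x k * y k)⁻¹ * x k * a k)
    (hy : ∀ k, y (k+1) = y k + a k * y k * (1 + x k * y k)⁻¹ * (a k)ᵀ)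
    (hx0 : (x 0).PosSemidef) (hy0 : (y 0).PosSemidef) :
    ∀ k, (x k).PosSemidef ∧ (y k).PosSemidef := by
  intro k
  induction k with
  | zero => exact ⟨hx0, hy0⟩
  | succ k ih =>
    obtain ⟨ihx, ihy⟩ := ih
    have f2 : x k * (1 + y k * x k)⁻¹ = (1 + x k * y k)⁻¹ * x k :=
      inv_swap (hu2 k) (hu1 k) (by noncomm_ring)
    constructor
    · have hcore : (x k * (1 + y k * x k)⁻¹).PosSemidef := psd_shift ihx ihy (hu1 k)
      have heq : (a k)ᵀ * (1 + x k * y k)⁻¹ * x k * a k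
          = (a k)ᴴ * (x k * (1 + y k * x k)⁻¹) * a k := by
        rw [Matrix.conjTranspose_eq_transpose_of_trivial, f2]
        noncomm_ring
      rw [hx k, heq]
      exact ihx.add (hcore.conjTranspose_mul_mul_same (a k))
    · have hcore : (y k * (1 + x k * y k)⁻¹).PosSemidef := psd_shift ihy ihx (hu2 k)
      have heq : a k * y k * (1 + x k * y k)⁻¹ * (a k)ᵀ
          = a k * (y k * (1 + x k * y k)⁻¹) * (a k)ᴴ := by
        rw [Matrix.conjTranspose_eq_transpose_of_trivial]
        noncomm_ring
      rw [hy k, heq]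
      exact ihy.add (hcore.mul_mul_conjTranspose_same (a k))

lemma key (G Q Aα Uα Vα : Matrix l l ℝ)
    (hUα : Uα = Aαᵀ + Q * Aα⁻¹ * G) (hVα : Vα = Aα + G * (Aαᵀ)⁻¹ * Q)
    (hAαu : IsUnit Aα) : Vα * (Aα⁻¹ * G) = (G * (Aαᵀ)⁻¹) * Uα := by
  have e1 : Aα * Aα⁻¹ = 1 := mul_inv_self hAαu
  have e2 : (Aαᵀ)⁻¹ * Aαᵀ = 1 := inv_self_mul (isUnit_transpose hAαu)
  rw [hUα, hVα]
  calc (Aα + G * (Aαᵀ)⁻¹ * Q) * (Aα⁻¹ * G)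
      = (Aα * Aα⁻¹) * G + G * ((Aαᵀ)⁻¹ * (Q * (Aα⁻¹ * G))) := by noncomm_ring
    _ = G + G * ((Aαᵀ)⁻¹ * (Q * (Aα⁻¹ * G))) := by rw [e1, one_mul]
    _ = G * (((Aαᵀ)⁻¹ * Aαᵀ)) + G * ((Aαᵀ)⁻¹ * (Q * (Aα⁻¹ * G))) := by rw [e2, mul_one]
    _ = (G * (Aαᵀ)⁻¹) * (Aαᵀ + Q * Aα⁻¹ * G) := by noncomm_ring

end ADDAAux
namespace ADDAAux

variable {l : Type*} [Fintype l] [DecidableEq l]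

lemma X0psd {G Q Aα Uα : Matrix l l ℝ} (hGp : G.PosSemidef) (hQp : Q.PosSemidef)
    (hUα : Uα = Aαᵀ + Q * Aα⁻¹ * G) (hAαu : IsUnit Aα) (hUαu : IsUnit Uα)
    {c : ℝ} (hc : 0 ≤ c) :
    (c • (Uα⁻¹ * Q * Aα⁻¹)).PosSemidef := by
  have hGs : Gᵀ = G := hGp.isHermitian
  have hQs : Qᵀ = Q := hQp.isHermitian
  set K : Matrix l l ℝ := (Aα⁻¹)ᵀ * Q * Aα⁻¹ with hKdef
  have hKpsd : K.PosSemidef := by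
    have := hQp.conjTranspose_mul_mul_same (Aα⁻¹)
    rwa [Matrix.conjTranspose_eq_transpose_of_trivial] at this
  have hKs : Kᵀ = K := hKpsd.isHermitian
  have htAA : Aαᵀ * (Aα⁻¹)ᵀ = 1 := by
    rw [← Matrix.transpose_mul, inv_self_mul hAαu, Matrix.transpose_one]
  have hUdec : Uα = Aαᵀ * (1 + K * G) := by
    rw [hUα, hKdef]
    calc Aαᵀ + Q * Aα⁻¹ * G
        = Aαᵀ + (Aαᵀ * (Aα⁻¹)ᵀ) * (Q * (Aα⁻¹ * G)) := by rw [htAA]; noncomm_ring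
      _ = Aαᵀ * (1 + (Aα⁻¹)ᵀ * Q * Aα⁻¹ * G) := by noncomm_ring
  have hKGu : IsUnit (1 + K * G) := by
    have hAT : IsUnit Aαᵀ := isUnit_transpose hAαu
    have h1 : (1 + K * G) = (Aαᵀ)⁻¹ * Uα := by
      rw [hUdec, ← mul_assoc, inv_self_mul hAT, one_mul]
    rw [h1, Matrix.isUnit_iff_isUnit_det, Matrix.det_mul]
    exact IsUnit.mul ((Matrix.isUnit_nonsing_inv_det_iff).mpr
      ((Matrix.isUnit_iff_isUnit_det _).mp hAT)) ((Matrix.isUnit_iff_isUnit_det _).mp hUαu)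
  have hGKu : IsUnit (1 + G * K) := by
    have h1 : (1 + G * K) = (1 + K * G)ᵀ := by
      rw [Matrix.transpose_add, Matrix.transpose_one, Matrix.transpose_mul, hKs, hGs]
    rw [h1]
    exact isUnit_transpose hKGu
  have hrep : Uα⁻¹ * Q * Aα⁻¹ = K * (1 + G * K)⁻¹ := by
    have hUinv : Uα⁻¹ = (1 + K * G)⁻¹ * (Aαᵀ)⁻¹ := by rw [hUdec, Matrix.mul_inv_rev]
    have hKalt : (Aαᵀ)⁻¹ * (Q * Aα⁻¹) = K := by
      rw [hKdef, ← Matrix.transpose_nonsing_inv, mul_assoc]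
    have hswap : K * (1 + G * K)⁻¹ = (1 + K * G)⁻¹ * K :=
      inv_swap hKGu hGKu (by noncomm_ring)
    calc Uα⁻¹ * Q * Aα⁻¹ = (1 + K * G)⁻¹ * ((Aαᵀ)⁻¹ * (Q * Aα⁻¹)) := by
          rw [hUinv]; noncomm_ring
      _ = (1 + K * G)⁻¹ * K := by rw [hKalt]
      _ = K * (1 + G * K)⁻¹ := hswap.symm
  rw [hrep]
  exact psd_smul (psd_shift hKpsd hGp hGKu) hc

lemma base (A G Q X : Matrix l l ℝ) (α : ℝ)
    (Aα Uα Vα : Matrix l l ℝ)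
    (hAα : Aα = A - α • 1) (hUα : Uα = Aαᵀ + Q * Aα⁻¹ * G) (hVα : Vα = Aα + G * (Aαᵀ)⁻¹ * Q)
    (hAαu : IsUnit Aα) (hUαu : IsUnit Uα) (hVαu : IsUnit Vα)
    (hCARE : Aᵀ * X + X * A + Q - X * G * X = 0)
    (hRu : IsUnit (A - G * X - α • 1)) :
    1 + (2*α) • Vα⁻¹
      = (1 + ((2*α) • (Aα⁻¹ * G * Uα⁻¹)) * X) * ((A - G*X + α•1) * (A - G*X - α•1)⁻¹)
    ∧ X - (2*α) • (Uα⁻¹ * Q * Aα⁻¹)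
      = (1 + (2*α) • Uα⁻¹) * X * ((A - G*X + α•1) * (A - G*X - α•1)⁻¹) := by
  have hAαTu : IsUnit Aαᵀ := isUnit_transpose hAαu
  have hWW : (A - G*X - α•(1:Matrix l l ℝ))⁻¹ * (A - G*X - α•1) = 1 := inv_self_mul hRu
  have hVV : Vα * Vα⁻¹ = 1 := mul_inv_self hVαu
  have hUU : Uα * Uα⁻¹ = 1 := mul_inv_self hUαu
  have hJJ : (Aαᵀ)⁻¹ * Aαᵀ = 1 := inv_self_mul hAαTu
  have hAA : Aα⁻¹ * Aα = 1 := inv_self_mul hAαu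
  have hVm : ∀ Z : Matrix l l ℝ, Vα * (Vα⁻¹ * Z) = Z := fun Z => by
    rw [← mul_assoc, hVV, one_mul]
  have hUm : ∀ Z : Matrix l l ℝ, Uα * (Uα⁻¹ * Z) = Z := fun Z => by
    rw [← mul_assoc, hUU, one_mul]
  have hJm : ∀ Z : Matrix l l ℝ, (Aαᵀ)⁻¹ * (Aαᵀ * Z) = Z := fun Z => by
    rw [← mul_assoc, hJJ, one_mul]
  have hAm : ∀ Z : Matrix l l ℝ, Aα⁻¹ * (Aα * Z) = Z := fun Z => by
    rw [← mul_assoc, hAA, one_mul]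
  have hkey := key G Q Aα Uα Vα hUα hVα hAαu
  have keym : ∀ Z : Matrix l l ℝ, Vα * (Aα⁻¹ * (G * (Uα⁻¹ * Z))) = G * ((Aαᵀ)⁻¹ * Z) := by
    intro Z
    calc Vα * (Aα⁻¹ * (G * (Uα⁻¹ * Z))) = (Vα * (Aα⁻¹ * G)) * (Uα⁻¹ * Z) := by noncomm_ring
      _ = ((G * (Aαᵀ)⁻¹) * Uα) * (Uα⁻¹ * Z) := by rw [hkey]
      _ = G * ((Aαᵀ)⁻¹ * (Uα * (Uα⁻¹ * Z))) := by noncomm_ring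
      _ = G * ((Aαᵀ)⁻¹ * Z) := by rw [hUm]
  have hA' : A = Aα + α • (1 : Matrix l l ℝ) := by rw [hAα]; abel
  have hAαT : Aαᵀ = Aᵀ - α • 1 := by
    rw [hAα]
    simp [Matrix.transpose_sub, Matrix.transpose_smul, Matrix.transpose_one]
  have hXGX : X * (G * X) = Aαᵀ * X + X * Aα + (2*α) • X + Q := by
    have h1 : Aαᵀ * X + X * Aα + (2*α) • X + Q - X * (G * X) = 0 := by
      rw [hAαT, hAα]
      have e : (Aᵀ - α•1) * X + X * (A - α•1) + (2*α) • X + Q - X * (G * X)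
          = Aᵀ * X + X * A + Q - X * G * X := by
        simp only [sub_mul, mul_sub, smul_mul_assoc, mul_smul_comm, one_mul, mul_one, mul_assoc]
        module
      rw [e, hCARE]
    exact (sub_eq_zero.mp h1).symm
  constructor
  · apply cancel_right hRu
    have hclear : (1 + ((2*α) • (Aα⁻¹ * G * Uα⁻¹)) * X)
          * ((A - G*X + α•1) * (A - G*X - α•1)⁻¹) * (A - G*X - α•1)
        = (1 + ((2*α) • (Aα⁻¹ * G * Uα⁻¹)) * X) * (A - G*X + α•1) := by
      calc (1 + ((2*α) • (Aα⁻¹ * G * Uα⁻¹)) * X)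
            * ((A - G*X + α•1) * (A - G*X - α•1)⁻¹) * (A - G*X - α•1)
          = (1 + ((2*α) • (Aα⁻¹ * G * Uα⁻¹)) * X)
            * ((A - G*X + α•1) * ((A - G*X - α•1)⁻¹ * (A - G*X - α•1))) := by noncomm_ring
        _ = _ := by rw [hWW, mul_one]
    rw [hclear]
    apply cancel_left hVαu
    simp only [mul_add, add_mul, mul_sub, sub_mul, smul_mul_assoc, mul_smul_comm, smul_add,
      smul_sub, smul_smul, mul_assoc, one_mul, mul_one]
    simp only [keym, hVm, hVV]
    simp only [hXGX]
    simp only [mul_add, add_mul, mul_sub, sub_mul, smul_mul_assoc, mul_smul_comm, smul_add,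
      smul_sub, smul_smul, mul_assoc, one_mul, mul_one]
    simp only [hJm, hJJ]
    rw [hVα, hA']
    simp only [mul_add, add_mul, mul_sub, sub_mul, smul_mul_assoc, mul_smul_comm, smul_add,
      smul_sub, smul_smul, mul_assoc, one_mul, mul_one]
    module
  · apply cancel_right hRu
    have hclear : (1 + (2*α) • Uα⁻¹) * X
          * ((A - G*X + α•1) * (A - G*X - α•1)⁻¹) * (A - G*X - α•1)
        = (1 + (2*α) • Uα⁻¹) * (X * (A - G*X + α•1)) := by
      calc (1 + (2*α) • Uα⁻¹) * X
            * ((A - G*X + α•1) * (A - G*X - α•1)⁻¹) * (A - G*X - α•1)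
          = (1 + (2*α) • Uα⁻¹)
            * (X * ((A - G*X + α•1) * ((A - G*X - α•1)⁻¹ * (A - G*X - α•1)))) := by noncomm_ring
        _ = _ := by rw [hWW, mul_one]
    rw [hclear]
    apply cancel_left hUαu
    simp only [mul_add, add_mul, mul_sub, sub_mul, smul_mul_assoc, mul_smul_comm, smul_add,
      smul_sub, smul_smul, mul_assoc, one_mul, mul_one]
    simp only [hUm, hUU]
    rw [hUα, hA']
    simp only [mul_add, add_mul, mul_sub, sub_mul, smul_mul_assoc, mul_smul_comm, smul_add,
      smul_sub, smul_smul, mul_assoc, one_mul, mul_one]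
    simp only [hAm, hAA]
    simp only [hXGX]
    simp only [mul_add, add_mul, mul_sub, sub_mul, smul_mul_assoc, mul_smul_comm, smul_add,
      smul_sub, smul_smul, mul_assoc, one_mul, mul_one]
    module

end ADDAAux
namespace ADDAAux

variable {l : Type*} [Fintype l] [DecidableEq l]

open scoped Matrix.Norms.L2Operator

lemma dot_eq_inner (u v : l → ℝ) :
    u ⬝ᵥ v = (inner ℝ ((EuclideanSpace.equiv l ℝ).symm u) ((EuclideanSpace.equiv l ℝ).symm v) : ℝ) := by
  simp [PiLp.inner_apply, dotProduct, RCLike.inner_apply, mul_comm]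

open scoped MatrixOrder in
lemma opnorm_mono {A B : Matrix l l ℝ} (hA : A.PosSemidef) (hBA : (B - A).PosSemidef) :
    ‖A‖ ≤ ‖B‖ := by
  have hSp : (CFC.sqrt A).PosSemidef := (CFC.sqrt_nonneg A).posSemidef
  set S := CFC.sqrt A with hS
  have hSS : S * S = A := CFC.sqrt_mul_sqrt_self A hA.nonneg
  have hSH : Sᴴ = S := hSp.isHermitian
  have hST : Sᵀ = S := by rwa [Matrix.conjTranspose_eq_transpose_of_trivial] at hSH
  have hnS : ‖S‖ * ‖S‖ = ‖A‖ := by rw [← Matrix.l2_opNorm_conjTranspose_mul_self S, hSH, hSS]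
  have hb : 0 ≤ ‖S‖ * Real.sqrt ‖B‖ := by positivity
  have hA_le : ‖A‖ ≤ ‖S‖ * Real.sqrt ‖B‖ := by
    rw [Matrix.l2_opNorm_def]
    refine ContinuousLinearMap.opNorm_le_bound _ hb (fun x => ?_)
    have hgoal : ((Matrix.toEuclideanLin.trans LinearMap.toContinuousLinearMap) A) x
        = (EuclideanSpace.equiv l ℝ).symm (A *ᵥ x) := rfl
    rw [hgoal]
    set y : EuclideanSpace ℝ l := (EuclideanSpace.equiv l ℝ).symm (S *ᵥ x) with hy
    have h0 : S *ᵥ (S *ᵥ (x : l → ℝ)) = A *ᵥ x := by rw [Matrix.mulVec_mulVec, hSS]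
    have h1 : ‖(EuclideanSpace.equiv l ℝ).symm (A *ᵥ x)‖ ≤ ‖S‖ * ‖y‖ := by
      have h2 := S.l2_opNorm_mulVec y
      have h3 : S *ᵥ (y : l → ℝ) = A *ᵥ x := h0
      rwa [h3] at h2
    have hyy : ‖y‖ * ‖y‖ = (x : l → ℝ) ⬝ᵥ (A *ᵥ (x : l → ℝ)) := by
      have e1 : ((x : l → ℝ)) ⬝ᵥ (A *ᵥ (x : l → ℝ)) = (S *ᵥ (x : l → ℝ)) ⬝ᵥ (S *ᵥ (x : l → ℝ)) := by
        rw [← h0, Matrix.dotProduct_mulVec]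
        congr 1
        rw [← Matrix.mulVec_transpose, hST]
      rw [e1, dot_eq_inner, real_inner_self_eq_norm_mul_norm]
    have hle : (x : l → ℝ) ⬝ᵥ (A *ᵥ (x : l → ℝ)) ≤ (x : l → ℝ) ⬝ᵥ (B *ᵥ (x : l → ℝ)) := by
      have h2 := hBA.dotProduct_mulVec_nonneg (x : l → ℝ)
      simp only [star_trivial, Matrix.sub_mulVec, dotProduct_sub] at h2
      linarith
    have hCS : (x : l → ℝ) ⬝ᵥ (B *ᵥ (x : l → ℝ)) ≤ ‖x‖ * (‖B‖ * ‖x‖) := by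
      have h4 := real_inner_le_norm x ((EuclideanSpace.equiv l ℝ).symm (B *ᵥ x))
      have h5 := B.l2_opNorm_mulVec x
      have h6 : (x : l → ℝ) ⬝ᵥ (B *ᵥ (x : l → ℝ))
          = (inner ℝ x ((EuclideanSpace.equiv l ℝ).symm (B *ᵥ (x : l → ℝ))) : ℝ) := by
        rw [dot_eq_inner]
        rfl
      rw [h6]
      calc (inner ℝ x ((EuclideanSpace.equiv l ℝ).symm (B *ᵥ (x : l → ℝ))) : ℝ)
          ≤ ‖x‖ * ‖(EuclideanSpace.equiv l ℝ).symm (B *ᵥ (x : l → ℝ))‖ := h4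
        _ ≤ ‖x‖ * (‖B‖ * ‖x‖) := by
            have := mul_le_mul_of_nonneg_left h5 (norm_nonneg x)
            linarith [this]
    have hy2 : ‖y‖ * ‖y‖ ≤ ‖B‖ * (‖x‖ * ‖x‖) := by rw [hyy]; nlinarith [hle, hCS]
    have hfin : ‖y‖ ≤ Real.sqrt ‖B‖ * ‖x‖ := by
      nlinarith [Real.sq_sqrt (norm_nonneg B), Real.sqrt_nonneg ‖B‖, norm_nonneg y,
        norm_nonneg x, sq_nonneg (‖y‖ - Real.sqrt ‖B‖ * ‖x‖), hy2,
        mul_nonneg (Real.sqrt_nonneg ‖B‖) (norm_nonneg x)]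
    calc ‖(EuclideanSpace.equiv l ℝ).symm (A *ᵥ x)‖ ≤ ‖S‖ * ‖y‖ := h1
      _ ≤ ‖S‖ * (Real.sqrt ‖B‖ * ‖x‖) := by
          exact mul_le_mul_of_nonneg_left hfin (norm_nonneg S)
      _ = ‖S‖ * Real.sqrt ‖B‖ * ‖x‖ := by ring
  nlinarith [Real.sq_sqrt (norm_nonneg B), Real.sqrt_nonneg ‖B‖, norm_nonneg S, norm_nonneg A,
    norm_nonneg B, sq_nonneg (‖S‖ - Real.sqrt ‖B‖)]

lemma norm_one_le : ‖(1 : Matrix l l ℝ)‖ ≤ 1 := by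
  rw [Matrix.cstar_norm_def, _root_.map_one]
  exact ContinuousLinearMap.norm_id_le

end ADDAAux
namespace ADDAAux

variable {l : Type*} [Fintype l] [DecidableEq l]

open Filter

lemma tendsto_pow_zero (CR : Matrix l l ℝ)
    (hρ : spectralRadius ℂ (CR.map (algebraMap ℝ ℂ)) < 1) :
    Tendsto (fun N : ℕ => ‖CR ^ N‖) atTop (nhds 0) := by
  classical
  letI : CompleteSpace (Matrix l l ℂ) := FiniteDimensional.complete ℂ _
  set Ac := CR.map (algebraMap ℝ ℂ) with hAcdef
  have hmap : ∀ N : ℕ, Ac ^ N = (CR ^ N).map (algebraMap ℝ ℂ) := by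
    intro N
    have h1 : Ac = (algebraMap ℝ ℂ).mapMatrix CR := rfl
    have h2 : (CR ^ N).map (algebraMap ℝ ℂ) = (algebraMap ℝ ℂ).mapMatrix (CR ^ N) := rfl
    rw [h1, h2, map_pow]
  obtain ⟨r, hr1, hr2⟩ := ENNReal.lt_iff_exists_nnreal_btwn.mp hρ
  have hgel := spectrum.pow_nnnorm_pow_one_div_tendsto_nhds_spectralRadius Ac
  have hev : ∀ᶠ N : ℕ in atTop, (‖Ac ^ N‖₊ : ENNReal) ^ (1/(N:ℝ)) < (r : ENNReal) :=
    hgel.eventually_lt_const hr1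
  have hev2 : ∀ᶠ N in atTop, ‖Ac ^ N‖ ≤ (r:ℝ) ^ N := by
    filter_upwards [hev, eventually_ge_atTop 1] with N hN hN1
    have hNne : (N:ℝ) ≠ 0 := Nat.cast_ne_zero.mpr (by omega)
    have hx2 : (‖Ac ^ N‖₊ : ENNReal) < (r:ENNReal) ^ (N:ℝ) := by
      calc (‖Ac ^ N‖₊ : ENNReal) = ((‖Ac ^ N‖₊ : ENNReal) ^ (1/(N:ℝ))) ^ (N:ℝ) := by
            rw [← ENNReal.rpow_mul, one_div, inv_mul_cancel₀ hNne, ENNReal.rpow_one]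
        _ < (r:ENNReal) ^ (N:ℝ) := ENNReal.rpow_lt_rpow hN (by positivity)
    rw [ENNReal.rpow_natCast, ← ENNReal.coe_pow, ENNReal.coe_lt_coe] at hx2
    exact_mod_cast hx2.le
  have htend0 : Tendsto (fun N : ℕ => (r:ℝ)^N) atTop (nhds 0) :=
    tendsto_pow_atTop_nhds_zero_of_lt_one r.coe_nonneg (by exact_mod_cast hr2)
  have htendAc : Tendsto (fun N => ‖Ac ^ N‖) atTop (nhds 0) :=
    squeeze_zero' (Eventually.of_forall fun _ => norm_nonneg _) hev2 htend0
  have hAc0 : Tendsto (fun N => Ac ^ N) atTop (nhds 0) :=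
    tendsto_zero_iff_norm_tendsto_zero.mpr htendAc
  set ψ : Matrix l l ℂ →ₗ[ℝ] Matrix l l ℝ := Complex.reLm.mapMatrix with hψdef
  have hψc : Continuous ψ := ψ.continuous_of_finiteDimensional
  have hψeq : ∀ N, ψ (Ac ^ N) = CR ^ N := by
    intro N
    rw [hmap]
    ext i j
    simp [hψdef, LinearMap.mapMatrix_apply, Matrix.map_apply]
  have h1 : Tendsto (fun N => ψ (Ac ^ N)) atTop (nhds (ψ 0)) := (hψc.tendsto 0).comp hAc0
  rw [map_zero] at h1
  have h2 : Tendsto (fun N : ℕ => CR ^ N) atTop (nhds 0) := by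
    simpa only [hψeq] using h1
  exact tendsto_zero_iff_norm_tendsto_zero.mp h2

end ADDAAux

open ADDAAux

theorem stmt_9 (n m p : ℕ)
    (A G Q : Matrix (Fin n) (Fin n) ℝ)
    (B : Matrix (Fin n) (Fin m) ℝ) (C : Matrix (Fin p) (Fin n) ℝ)
    (hG : G = B * Bᵀ) (hQ : Q = Cᵀ * C)
    (α : ℝ) (hα : 0 < α)
    (Aα Uα Vα : Matrix (Fin n) (Fin n) ℝ)
    (hAα : Aα = A - α • 1)
    (hUα : Uα = Aαᵀ + Q * Aα⁻¹ * G)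
    (hVα : Vα = Aα + G * (Aαᵀ)⁻¹ * Q)
    (hAαu : IsUnit Aα) (hUαu : IsUnit Uα) (hVαu : IsUnit Vα)
    (X Y : Matrix (Fin n) (Fin n) ℝ)
    (hXpsd : X.PosSemidef) (hYpsd : Y.PosSemidef)
    (hCARE : Aᵀ * X + X * A + Q - X * G * X = 0)
    (hDUAL : A * Y + Y * Aᵀ - Y * Q * Y + G = 0)
    (R S : Matrix (Fin n) (Fin n) ℝ)
    (hR : R = A - G * X) (hS : S = Aᵀ - Q * Y)
    (hRu : IsUnit (R - α • 1)) (hSu : IsUnit (S - α • 1))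
    (CR CS : Matrix (Fin n) (Fin n) ℝ)
    (hCR : CR = (R + α • 1) * (R - α • 1)⁻¹)
    (hCS : CS = (S + α • 1) * (S - α • 1)⁻¹)
    (Ahat Xs Ys : ℕ → Matrix (Fin n) (Fin n) ℝ)
    (hA0 : Ahat 0 = 1 + (2 * α) • Vα⁻¹)
    (hX0 : Xs 0 = (2 * α) • (Uα⁻¹ * Q * Aα⁻¹))
    (hY0 : Ys 0 = (2 * α) • (Aα⁻¹ * G * Uα⁻¹))
    (hu1 : ∀ k, IsUnit (1 + Ys k * Xs k))
    (hu2 : ∀ k, IsUnit (1 + Xs k * Ys k))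
    (hArec : ∀ k, Ahat (k + 1) = Ahat k * (1 + Ys k * Xs k)⁻¹ * Ahat k)
    (hXrec : ∀ k, Xs (k + 1) = Xs k + (Ahat k)ᵀ * (1 + Xs k * Ys k)⁻¹ * Xs k * Ahat k)
    (hYrec : ∀ k, Ys (k + 1) = Ys k + Ahat k * Ys k * (1 + Xs k * Ys k)⁻¹ * (Ahat k)ᵀ) :
    (∀ k, ‖Ahat k‖ ≤ (1 + ‖Y‖ * ‖X‖) * ‖CR ^ (2 ^ k)‖) ∧
      (spectralRadius ℂ (CR.map (algebraMap ℝ ℂ)) < 1 →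
        Tendsto (fun k => ‖Ahat k‖) atTop (nhds 0)) := by
  have hGp : G.PosSemidef := by
    rw [hG]
    have := Matrix.posSemidef_self_mul_conjTranspose B
    rwa [Matrix.conjTranspose_eq_transpose_of_trivial] at this
  have hQp : Q.PosSemidef := by
    rw [hQ]
    have := Matrix.posSemidef_conjTranspose_mul_self C
    rwa [Matrix.conjTranspose_eq_transpose_of_trivial] at this
  have hGs : Gᵀ = G := hGp.isHermitian
  have hQs : Qᵀ = Q := hQp.isHermitian
  have hYs : Yᵀ = Y := hYpsd.isHermitian
  have hα2 : (0:ℝ) ≤ 2*α := by linarith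
  have hAαTu : IsUnit Aαᵀ := isUnit_transpose hAαu
  have hUVt : Uαᵀ = Vα := by
    rw [hUα, hVα]
    simp [Matrix.transpose_add, Matrix.transpose_mul, Matrix.transpose_transpose, hGs, hQs,
      Matrix.transpose_nonsing_inv, mul_assoc]
  have hVUt : Vαᵀ = Uα := by rw [← hUVt, Matrix.transpose_transpose]
  have hAαT : Aαᵀ = Aᵀ - α • 1 := by
    rw [hAα]
    simp [Matrix.transpose_sub, Matrix.transpose_smul, Matrix.transpose_one]
  have hVαdual : Vα = (Aαᵀ)ᵀ + G * (Aαᵀ)⁻¹ * Q := by rw [hVα, Matrix.transpose_transpose]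
  have hUαdual : Uα = Aαᵀ + Q * ((Aαᵀ)ᵀ)⁻¹ * G := by rw [hUα, Matrix.transpose_transpose]
  have hDUAL' : (Aᵀ)ᵀ * Y + Y * Aᵀ + G - Y * Q * Y = 0 := by
    rw [Matrix.transpose_transpose]
    calc A * Y + Y * Aᵀ + G - Y * Q * Y = A * Y + Y * Aᵀ - Y * Q * Y + G := by abel
      _ = 0 := hDUAL
  have hRu' : IsUnit (A - G * X - α • 1) := by rwa [hR] at hRu
  have hSu' : IsUnit (Aᵀ - Q * Y - α • 1) := by rwa [hS] at hSu
  obtain ⟨b1, b2⟩ := base A G Q X α Aα Uα Vα hAα hUα hVα hAαu hUαu hVαu hCARE hRu'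
  obtain ⟨b3, b4⟩ := base Aᵀ Q G Y α Aαᵀ Vα Uα hAαT hVαdual hUαdual hAαTu hVαu hUαu hDUAL' hSu'
  have hkey := key G Q Aα Uα Vα hUα hVα hAαu
  have hY0eq : Aα⁻¹ * G * Uα⁻¹ = Vα⁻¹ * G * (Aαᵀ)⁻¹ := by
    have h2 := inv_swap hVαu hUαu hkey
    exact h2.trans (mul_assoc _ _ _).symm
  have hX0eq : Uα⁻¹ * Q * Aα⁻¹ = (Aαᵀ)⁻¹ * Q * Vα⁻¹ := by
    have hkeyd := key Q G Aαᵀ Vα Uα hVαdual hUαdual hAαTu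
    rw [Matrix.transpose_transpose] at hkeyd
    have h2 := inv_swap hUαu hVαu hkeyd
    calc Uα⁻¹ * Q * Aα⁻¹ = Uα⁻¹ * (Q * Aα⁻¹) := mul_assoc _ _ _
      _ = (Aαᵀ)⁻¹ * Q * Vα⁻¹ := h2.symm
  have hX0psd : (Xs 0).PosSemidef := by
    rw [hX0]; exact X0psd hGp hQp hUα hAαu hUαu hα2
  have hY0psd : (Ys 0).PosSemidef := by
    rw [hY0, hY0eq]; exact X0psd hQp hGp hVαdual hAαTu hVαu hα2
  have hX0s : (Xs 0)ᵀ = Xs 0 := hX0psd.isHermitian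
  have hY0s : (Ys 0)ᵀ = Ys 0 := hY0psd.isHermitian
  have hsym := symiter Ahat Xs Ys hu1 hu2 hXrec hYrec hX0s hY0s
  have hsymX : ∀ k, (Xs k)ᵀ = Xs k := fun k => (hsym k).1
  have hsymY : ∀ k, (Ys k)ᵀ = Ys k := fun k => (hsym k).2
  have hpsd := psditer Ahat Xs Ys hu1 hu2 hXrec hYrec hX0psd hY0psd
  have hCRe : CR = (A - G*X + α•1) * (A - G*X - α•1)⁻¹ := by rw [hCR, hR]
  have hCSe : CS = (Aᵀ - Q*Y + α•1) * (Aᵀ - Q*Y - α•1)⁻¹ := by rw [hCS, hS]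
  have hbase1 : Ahat 0 = (1 + Ys 0 * X) * CR := by
    rw [hA0, hY0, hCRe]; exact b1
  have hA0T : (Ahat 0)ᵀ = 1 + (2*α) • Uα⁻¹ := by
    rw [hA0]
    simp [Matrix.transpose_add, Matrix.transpose_smul, Matrix.transpose_one,
      Matrix.transpose_nonsing_inv, hVUt]
  have hbase2 : X - Xs 0 = (Ahat 0)ᵀ * X * CR := by
    rw [hX0, hA0T, hCRe]; exact b2
  have hiter1 := iter Ahat Xs Ys X CR hsymX hsymY hu1 hu2 hArec hXrec hYrec hbase1 hbase2
  -- dual recursions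
  have hATrec : ∀ k, (Ahat (k+1))ᵀ = (Ahat k)ᵀ * (1 + Xs k * Ys k)⁻¹ * (Ahat k)ᵀ := by
    intro k
    rw [hArec k, Matrix.transpose_mul, Matrix.transpose_mul, Matrix.transpose_nonsing_inv,
      show (1 + Ys k * Xs k)ᵀ = 1 + Xs k * Ys k by
        simp [Matrix.transpose_add, Matrix.transpose_mul, hsymX k, hsymY k],
      ← mul_assoc]
  have hYdualrec : ∀ k, Ys (k+1) = Ys k + ((Ahat k)ᵀ)ᵀ * (1 + Ys k * Xs k)⁻¹ * Ys k * (Ahat k)ᵀ := by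
    intro k
    rw [hYrec k, Matrix.transpose_transpose]
    have hswap : Ys k * (1 + Xs k * Ys k)⁻¹ = (1 + Ys k * Xs k)⁻¹ * Ys k :=
      inv_swap (hu1 k) (hu2 k) (by noncomm_ring)
    congr 1
    calc Ahat k * Ys k * (1 + Xs k * Ys k)⁻¹ * (Ahat k)ᵀ
        = Ahat k * (Ys k * (1 + Xs k * Ys k)⁻¹) * (Ahat k)ᵀ := by noncomm_ring
      _ = Ahat k * ((1 + Ys k * Xs k)⁻¹ * Ys k) * (Ahat k)ᵀ := by rw [hswap]
      _ = Ahat k * (1 + Ys k * Xs k)⁻¹ * Ys k * (Ahat k)ᵀ := by noncomm_ring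
  have hXdualrec : ∀ k, Xs (k+1) = Xs k + (Ahat k)ᵀ * Xs k * (1 + Ys k * Xs k)⁻¹ * ((Ahat k)ᵀ)ᵀ := by
    intro k
    rw [hXrec k, Matrix.transpose_transpose]
    have hswap : Xs k * (1 + Ys k * Xs k)⁻¹ = (1 + Xs k * Ys k)⁻¹ * Xs k :=
      inv_swap (hu2 k) (hu1 k) (by noncomm_ring)
    congr 1
    calc (Ahat k)ᵀ * (1 + Xs k * Ys k)⁻¹ * Xs k * Ahat k
        = (Ahat k)ᵀ * ((1 + Xs k * Ys k)⁻¹ * Xs k) * Ahat k := by noncomm_ring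
      _ = (Ahat k)ᵀ * (Xs k * (1 + Ys k * Xs k)⁻¹) * Ahat k := by rw [hswap]
      _ = (Ahat k)ᵀ * Xs k * (1 + Ys k * Xs k)⁻¹ * Ahat k := by noncomm_ring
  have hbase3 : (Ahat 0)ᵀ = (1 + Xs 0 * Y) * CS := by
    rw [hA0T, hX0, hX0eq, hCSe]; exact b3
  have hbase4 : Y - Ys 0 = ((Ahat 0)ᵀ)ᵀ * Y * CS := by
    rw [Matrix.transpose_transpose, hA0, hY0, hY0eq, hCSe]; exact b4
  have hiter2 := iter (fun k => (Ahat k)ᵀ) Ys Xs Y CS hsymY hsymX hu2 hu1 hATrec hYdualrec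
    hXdualrec hbase3 hbase4
  have hYmono : ∀ k, (Y - Ys k).PosSemidef := by
    intro k
    have h4 : Y - Ys k = Ahat k * Y * CS ^ (2^k) := by
      have := (hiter2 k).2
      rwa [Matrix.transpose_transpose] at this
    have h3 : (Ahat k)ᵀ = (1 + Xs k * Y) * CS ^ (2^k) := (hiter2 k).1
    have hsymYk : (Y - Ys k)ᵀ = Y - Ys k := by rw [Matrix.transpose_sub, hYs, hsymY k]
    have hform : Y - Ys k = (CS ^ (2^k))ᴴ * (Y + Y * Xs k * Y) * (CS ^ (2^k)) := by
      calc Y - Ys k = (Y - Ys k)ᵀ := hsymYk.symm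
        _ = (CS ^ (2^k))ᵀ * (Yᵀ * (Ahat k)ᵀ) := by
            rw [h4, Matrix.transpose_mul, Matrix.transpose_mul]
        _ = (CS ^ (2^k))ᵀ * (Y * ((1 + Xs k * Y) * CS ^ (2^k))) := by rw [hYs, h3]
        _ = (CS ^ (2^k))ᴴ * (Y + Y * Xs k * Y) * (CS ^ (2^k)) := by
            rw [Matrix.conjTranspose_eq_transpose_of_trivial]
            noncomm_ring
    rw [hform]
    have hcore : (Y + Y * Xs k * Y).PosSemidef := by
      have h5 := ((hpsd k).1).mul_mul_conjTranspose_same Y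
      rw [show Yᴴ = Y from hYpsd.isHermitian] at h5
      exact hYpsd.add h5
    exact hcore.conjTranspose_mul_mul_same _
  have hbound : ∀ k, ‖Ahat k‖ ≤ (1 + ‖Y‖*‖X‖) * ‖CR ^ (2^k)‖ := by
    intro k
    have h1 : Ahat k = (1 + Ys k * X) * CR ^ (2^k) := (hiter1 k).1
    have hYk : ‖Ys k‖ ≤ ‖Y‖ := opnorm_mono (hpsd k).2 (hYmono k)
    calc ‖Ahat k‖ = ‖(1 + Ys k * X) * CR ^ (2^k)‖ := by rw [h1]
      _ ≤ ‖1 + Ys k * X‖ * ‖CR ^ (2^k)‖ := Matrix.l2_opNorm_mul _ _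
      _ ≤ (1 + ‖Y‖*‖X‖) * ‖CR ^ (2^k)‖ := by
          refine mul_le_mul_of_nonneg_right ?_ (norm_nonneg _)
          have hmul := Matrix.l2_opNorm_mul (Ys k) X
          have h1le := norm_one_le (l := Fin n)
          have hXnn : (0:ℝ) ≤ ‖X‖ := norm_nonneg _
          have hYX : ‖Ys k‖ * ‖X‖ ≤ ‖Y‖ * ‖X‖ := mul_le_mul_of_nonneg_right hYk hXnn
          calc ‖1 + Ys k * X‖ ≤ ‖(1 : Matrix (Fin n) (Fin n) ℝ)‖ + ‖Ys k * X‖ := norm_add_le _ _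
            _ ≤ 1 + ‖Y‖ * ‖X‖ := by linarith
  refine ⟨hbound, ?_⟩
  intro hρ
  have htend := tendsto_pow_zero CR hρ
  have h2k : Tendsto (fun k : ℕ => (2:ℕ)^k) atTop atTop :=
    tendsto_pow_atTop_atTop_of_one_lt (by norm_num)
  have hcomp : Tendsto (fun k : ℕ => ‖CR ^ (2^k)‖) atTop (nhds 0) := htend.comp h2k
  have hconst : Tendsto (fun k : ℕ => (1 + ‖Y‖*‖X‖) * ‖CR ^ (2^k)‖) atTop (nhds 0) := by
    simpa using hcomp.const_mul (1 + ‖Y‖*‖X‖)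
  exact squeeze_zero (fun k => norm_nonneg _) hbound hconst
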